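/- Let a ∈ (0, +∞) and let L̆ : (0, +∞) → ℝ be a function such that t ↦ L̆(t)/t is locally integrable on (0, +∞), satisfying 0 ≤ L̆(x) < +∞ for all x > 0, lim_{x→0⁺} ∫_x^a L̆(t)/t dt = +∞ and lim_{x→+∞} ∫_a^x L̆(t)/t dt = +∞. Then for every k > 0 the function F_k(x) = exp[−k exp(−∫_a^x L̆(t)/t dt)], x ∈ (0, +∞), is continuous and nondecreasing with lim_{x→0⁺} F_k(x) = 0 and lim_{x→+∞} F_k(x) = 1, and at every point x > 0 at which L̆ is continuous, F_k is differentiable with derivative f_k(x) and −x f_k(x)/(F_k(x) log F_k(x)) = L̆(x); that is, L̆ is the reversed aging intensity function of every member of the family {F_k : k > 0}. -/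

import Mathlib

open MeasureTheory Filter Set Real

/-- The candidate cdf built from a prescribed reversed aging intensity `L` for `α = 0`:
`F_k(x) = exp[-k exp(-∫_a^x L(t)/t dt)]`. -/
noncomputable def Fzero (a k : ℝ) (L : ℝ → ℝ) (x : ℝ) : ℝ :=
  Real.exp (-(k * Real.exp (-∫ t in a..x, L t / t)))

/-- A nonnegative function `L̆` on `(0,∞)` whose integral `∫ L̆(t)/t dt` diverges both
at `0⁺` and at `+∞` determines, for every `k > 0`, the cdf
`F_k(x) = exp[-k exp(-∫_a^x L̆(t)/t dt)]` of a positive absolutely continuous random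
variable (continuous, nondecreasing, with limits `0` at `0⁺` and `1` at `+∞`), and at
every continuity point `x > 0` of `L̆`, `F_k` is differentiable with derivative
`f_k(x)` satisfying `-x f_k(x)/(F_k(x) log F_k(x)) = L̆(x)`; i.e. `L̆` is the reversed
aging intensity function of every member of the family `{F_k : k > 0}`. -/
theorem stmt_5 (a : ℝ) (ha : 0 < a) (L : ℝ → ℝ)
    (hLi : MeasureTheory.LocallyIntegrableOn (fun t => L t / t) (Set.Ioi 0)
      MeasureTheory.volume)
    (hL0 : ∀ x > (0:ℝ), 0 ≤ L x)
    (h2 : Filter.Tendsto (fun x => ∫ t in x..a, L t / t)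
      (nhdsWithin (0:ℝ) (Set.Ioi 0)) Filter.atTop)
    (h3 : Filter.Tendsto (fun x => ∫ t in a..x, L t / t) Filter.atTop Filter.atTop)
    (k : ℝ) (hk : 0 < k) :
    ContinuousOn (Fzero a k L) (Set.Ioi 0) ∧
    MonotoneOn (Fzero a k L) (Set.Ioi 0) ∧
    Filter.Tendsto (Fzero a k L) (nhdsWithin (0:ℝ) (Set.Ioi 0)) (nhds 0) ∧
    Filter.Tendsto (Fzero a k L) Filter.atTop (nhds 1) ∧
    ∀ x > (0:ℝ), ContinuousWithinAt L (Set.Ioi 0) x →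
      ∃ d : ℝ, HasDerivAt (Fzero a k L) d x ∧
        -(x * d) / (Fzero a k L x * Real.log (Fzero a k L x)) = L x := by
  set f : ℝ → ℝ := fun t => L t / t with hf
  set G : ℝ → ℝ := fun x => ∫ t in a..x, f t with hG
  -- interval integrability between any two positive points
  have hII : ∀ {x y : ℝ}, 0 < x → 0 < y → IntervalIntegrable f volume x y := by
    intro x y hx hy
    have hsub : Set.uIcc x y ⊆ Set.Ioi 0 := by
      intro t ht
      rcases Set.mem_uIcc.1 ht with h | h
      · exact lt_of_lt_of_le hx h.1
      · exact lt_of_lt_of_le hy h.1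
    exact (hLi.integrableOn_compact_subset hsub isCompact_uIcc).intervalIntegrable
  -- monotonicity of the primitive G
  have hGmono : ∀ {x y : ℝ}, 0 < x → x ≤ y → G x ≤ G y := by
    intro x y hx hxy
    have hy : 0 < y := lt_of_lt_of_le hx hxy
    have hadd := intervalIntegral.integral_add_adjacent_intervals (hII ha hx) (hII hx hy)
    have hnn : 0 ≤ ∫ t in x..y, f t := by
      apply intervalIntegral.integral_nonneg hxy
      intro u hu
      have hu0 : 0 < u := lt_of_lt_of_le hx hu.1
      exact div_nonneg (hL0 u hu0) hu0.le
    simp only [hG]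
    linarith [hadd, hnn]
  -- continuity of G on Ioi 0
  have hGc : ∀ x ∈ Set.Ioi (0:ℝ), ContinuousAt G x := by
    intro x hx
    have hx0 : (0:ℝ) < x := hx
    have hint : IntervalIntegrable f volume (min a (x/2)) (max a (2*x)) :=
      hII (lt_min ha (by linarith)) (lt_of_lt_of_le ha (le_max_left _ _))
    have h := intervalIntegral.continuousWithinAt_primitive (b₀ := x)
      (measure_singleton x) hint
    exact h.continuousAt (Icc_mem_nhds (by linarith) (by linarith))
  have hGcon : ContinuousOn G (Set.Ioi 0) := fun x hx => (hGc x hx).continuousWithinAt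
  have hFco : ContinuousOn (Fzero a k L) (Set.Ioi 0) := by
    have : ContinuousOn (fun x => Real.exp (-(k * Real.exp (-G x)))) (Set.Ioi 0) :=
      Real.continuous_exp.comp_continuousOn
        ((continuousOn_const.mul (Real.continuous_exp.comp_continuousOn hGcon.neg)).neg)
    exact this
  refine ⟨hFco, ?_, ?_, ?_, ?_⟩
  · -- monotone
    intro x hx y hy hxy
    have h := hGmono hx hxy
    show Real.exp _ ≤ Real.exp _
    apply Real.exp_le_exp.2
    have : Real.exp (-G y) ≤ Real.exp (-G x) := Real.exp_le_exp.2 (by linarith)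
    nlinarith [hk.le]
  · -- limit at 0⁺
    have hG0 : Tendsto G (nhdsWithin (0:ℝ) (Set.Ioi 0)) atBot := by
      have : G = fun x => -(∫ t in x..a, f t) := by
        funext x
        show (∫ t in a..x, f t) = -(∫ t in x..a, f t)
        exact intervalIntegral.integral_symm x a
      rw [this]
      exact tendsto_neg_atTop_atBot.comp h2
    have t1 : Tendsto (fun x => -G x) (nhdsWithin (0:ℝ) (Set.Ioi 0)) atTop :=
      tendsto_neg_atBot_atTop.comp hG0
    have t2 := Real.tendsto_exp_atTop.comp t1
    have t3 : Tendsto (fun x => k * Real.exp (-G x)) (nhdsWithin (0:ℝ) (Set.Ioi 0)) atTop :=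
      Tendsto.const_mul_atTop hk t2
    have t4 : Tendsto (fun x => -(k * Real.exp (-G x)))
        (nhdsWithin (0:ℝ) (Set.Ioi 0)) atBot := tendsto_neg_atTop_atBot.comp t3
    exact Real.tendsto_exp_atBot.comp t4
  · -- limit at +∞
    have s1 : Tendsto (fun x => -G x) atTop atBot := tendsto_neg_atTop_atBot.comp h3
    have s2 : Tendsto (fun x => Real.exp (-G x)) atTop (nhds 0) :=
      Real.tendsto_exp_atBot.comp s1
    have s3 : Tendsto (fun x => -(k * Real.exp (-G x))) atTop (nhds 0) := by
      have := (s2.const_mul k).neg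
      simpa using this
    have s4 := (Real.continuous_exp.continuousAt (x := (0:ℝ))).tendsto.comp s3
    simp only [Real.exp_zero] at s4
    exact s4
  · -- derivative at continuity points
    intro x hx hLc
    have hca : ContinuousAt L x := hLc.continuousAt (Ioi_mem_nhds hx)
    have hfca : ContinuousAt f x := hca.div continuousAt_id (ne_of_gt hx)
    have hmeas : StronglyMeasurableAtFilter f (nhds x) := by
      refine ⟨Set.Icc (x/2) (2*x), Icc_mem_nhds (by linarith) (by linarith), ?_⟩
      have hsub : Set.Icc (x/2) (2*x) ⊆ Set.Ioi 0 := fun t ht => lt_of_lt_of_le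
        (by linarith : (0:ℝ) < x/2) ht.1
      exact (hLi.integrableOn_compact_subset hsub isCompact_Icc).aestronglyMeasurable
    have d1 : HasDerivAt G (f x) x :=
      intervalIntegral.integral_hasDerivAt_right (hII ha hx) hmeas hfca
    have d6 := (((d1.neg.exp.const_mul k).neg).exp)
    have hFd : HasDerivAt (Fzero a k L)
        (Real.exp (-(k * Real.exp (-G x))) * -(k * (Real.exp (-G x) * -f x))) x := d6
    refine ⟨_, hFd, ?_⟩
    have hFval : Fzero a k L x = Real.exp (-(k * Real.exp (-G x))) := rfl
    have hlog : Real.log (Fzero a k L x) = -(k * Real.exp (-G x)) := by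
      rw [hFval, Real.log_exp]
    have hE : (0:ℝ) < Real.exp (-G x) := Real.exp_pos _
    have hF : (0:ℝ) < Fzero a k L x := Real.exp_pos _
    rw [hlog, hFval]
    have hfx : f x = L x / x := rfl
    rw [hfx]
    field_simp
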